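/- Let F: [0,∞) → [0,∞) be a bounded, monotone decreasing function with lim_{t→∞} F(t) = 0, and let θ ∈ (0,1). Define F̃(s) := Σ_{k=0}^∞ 2^{-kθ} F(2^{-k} s) for s > 0. Then F̃ is finite, bounded, decreasing, satisfies lim_{s→∞} F̃(s) = 0, and there is a constant C (depending only on θ) such that for all s > 0, ∫₀¹ ∫₀¹ F(s·|x-y|) / |x-y|^{1-θ} dx dy ≤ C · F̃(s). -/

import Mathlib

open MeasureTheory Filter

/-- Diagonal integral estimate (IJD-2): for a bounded decreasing `F : [0,∞) → [0,∞)`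
vanishing at infinity and `θ ∈ (0,1)`, the function
`F̃(s) := Σ_{k≥0} 2^{-kθ} F(2^{-k} s)` is finite, bounded, decreasing, tends to 0 at
infinity, and `∫₀¹∫₀¹ F(s|x-y|)/|x-y|^{1-θ} dx dy ≤ C F̃(s)` uniformly in `s > 0`. -/
theorem stmt5 (F : ℝ → ℝ) (θ : ℝ) (hθ : θ ∈ Set.Ioo (0:ℝ) 1)
    (hF0 : ∀ t, 0 ≤ t → 0 ≤ F t) (hFanti : AntitoneOn F (Set.Ici 0))
    (hFbdd : ∃ M, ∀ t, 0 ≤ t → F t ≤ M)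
    (hFlim : Tendsto F atTop (nhds 0)) :
    (∀ s : ℝ, 0 < s →
        Summable (fun k : ℕ => (2:ℝ) ^ (-(k:ℝ) * θ) * F ((2:ℝ) ^ (-(k:ℝ)) * s)))
    ∧ (∃ M, ∀ s : ℝ, 0 < s →
        (∑' k : ℕ, (2:ℝ) ^ (-(k:ℝ) * θ) * F ((2:ℝ) ^ (-(k:ℝ)) * s)) ≤ M)
    ∧ AntitoneOn (fun s => ∑' k : ℕ, (2:ℝ) ^ (-(k:ℝ) * θ) * F ((2:ℝ) ^ (-(k:ℝ)) * s))
        (Set.Ioi 0)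
    ∧ Tendsto (fun s => ∑' k : ℕ, (2:ℝ) ^ (-(k:ℝ) * θ) * F ((2:ℝ) ^ (-(k:ℝ)) * s))
        atTop (nhds 0)
    ∧ ∃ C : ℝ, 0 < C ∧ ∀ s : ℝ, 0 < s →
        (∫⁻ x in Set.Icc (0:ℝ) 1, ∫⁻ y in Set.Icc (0:ℝ) 1,
            ENNReal.ofReal (F (s * |x - y|) / |x - y| ^ (1 - θ)))
          ≤ ENNReal.ofReal
              (C * ∑' k : ℕ, (2:ℝ) ^ (-(k:ℝ) * θ) * F ((2:ℝ) ^ (-(k:ℝ)) * s)) := by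
  obtain ⟨θpos, θlt1⟩ := hθ
  obtain ⟨M, hM⟩ := hFbdd
  have hM0 : 0 ≤ M := le_trans (hF0 0 le_rfl) (hM 0 le_rfl)
  set r : ℝ := (2:ℝ) ^ (-θ) with hrdef
  have hr0 : 0 < r := Real.rpow_pos_of_pos (by norm_num) _
  have hr1 : r < 1 := Real.rpow_lt_one_of_one_lt_of_neg (by norm_num) (by linarith)
  have hpow : ∀ k : ℕ, (2:ℝ) ^ (-(k:ℝ) * θ) = r ^ k := by
    intro k
    rw [hrdef, ← Real.rpow_natCast ((2:ℝ) ^ (-θ)) k, ← Real.rpow_mul (by norm_num)]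
    ring_nf
  have hb0 : ∀ k : ℕ, (0:ℝ) < (2:ℝ) ^ (-(k:ℝ)) := fun k =>
    Real.rpow_pos_of_pos (by norm_num) _
  have hb1 : ∀ k : ℕ, (2:ℝ) ^ (-(k:ℝ)) ≤ 1 := fun k =>
    Real.rpow_le_one_of_one_le_of_nonpos (by norm_num) (neg_nonpos.mpr (Nat.cast_nonneg k))
  -- nonnegativity and bound of terms
  have hterm0 : ∀ s : ℝ, 0 ≤ s → ∀ k : ℕ,
      0 ≤ (2:ℝ) ^ (-(k:ℝ) * θ) * F ((2:ℝ) ^ (-(k:ℝ)) * s) := by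
    intro s hs k
    exact mul_nonneg (Real.rpow_pos_of_pos (by norm_num) _).le
      (hF0 _ (mul_nonneg (hb0 k).le hs))
  have htermle : ∀ s : ℝ, 0 ≤ s → ∀ k : ℕ,
      (2:ℝ) ^ (-(k:ℝ) * θ) * F ((2:ℝ) ^ (-(k:ℝ)) * s) ≤ r ^ k * M := by
    intro s hs k
    rw [hpow k]
    exact mul_le_mul_of_nonneg_left (hM _ (mul_nonneg (hb0 k).le hs)) (by positivity)
  have hgeo : Summable (fun k : ℕ => r ^ k * M) :=
    (summable_geometric_of_lt_one hr0.le hr1).mul_right M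
  have hsum : ∀ s : ℝ, 0 ≤ s →
      Summable (fun k : ℕ => (2:ℝ) ^ (-(k:ℝ) * θ) * F ((2:ℝ) ^ (-(k:ℝ)) * s)) := by
    intro s hs
    exact Summable.of_nonneg_of_le (hterm0 s hs) (htermle s hs) hgeo
  refine ⟨fun s hs => hsum s hs.le, ⟨M * (1 - r)⁻¹, ?_⟩, ?_, ?_, ?_⟩
  · intro s hs
    calc (∑' k : ℕ, (2:ℝ) ^ (-(k:ℝ) * θ) * F ((2:ℝ) ^ (-(k:ℝ)) * s))
        ≤ ∑' k : ℕ, r ^ k * M := Summable.tsum_le_tsum (htermle s hs.le) (hsum s hs.le) hgeo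
      _ = M * (1 - r)⁻¹ := by
          rw [tsum_mul_right, tsum_geometric_of_lt_one hr0.le hr1]; ring
  · intro s1 hs1 s2 hs2 h
    refine Summable.tsum_le_tsum (fun k => ?_) (hsum s2 (lt_of_lt_of_le hs1 h).le) (hsum s1 hs1.le)
    refine mul_le_mul_of_nonneg_left ?_ (Real.rpow_pos_of_pos (by norm_num) _).le
    exact hFanti (mul_nonneg (hb0 k).le hs1.le)
      (mul_nonneg (hb0 k).le (le_trans hs1.le h)) (by nlinarith [hb0 k])
  · have := tendsto_tsum_of_dominated_convergence (f := fun (s : ℝ) (k : ℕ) =>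
      (2:ℝ) ^ (-(k:ℝ) * θ) * F ((2:ℝ) ^ (-(k:ℝ)) * s)) (g := fun _ => (0:ℝ))
      (𝓕 := atTop) hgeo ?_ ?_
    · simpa using this
    · intro k
      have h1 : Tendsto (fun s : ℝ => (2:ℝ) ^ (-(k:ℝ)) * s) atTop atTop :=
        Tendsto.const_mul_atTop (hb0 k) tendsto_id
      have h2 := (hFlim.comp h1).const_mul ((2:ℝ) ^ (-(k:ℝ) * θ))
      simpa using h2
    · filter_upwards [eventually_ge_atTop (0:ℝ)] with s hs k
      rw [Real.norm_eq_abs, abs_of_nonneg (hterm0 s hs k)]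
      exact htermle s hs k
  · refine ⟨4, by norm_num, fun s hs => ?_⟩
    set a : ℕ → ℝ := fun k => (2:ℝ) ^ (-(k:ℝ) * θ) * F ((2:ℝ) ^ (-(k:ℝ)) * s) with hadef
    set b : ℕ → ℝ := fun k => (2:ℝ) ^ (-(k:ℝ)) with hbdef
    have hbpos : ∀ k, 0 < b k := hb0
    have hbhalf : ∀ k : ℕ, b k = (1/2:ℝ) ^ k := by
      intro k
      show (2:ℝ) ^ (-(k:ℝ)) = (1/2:ℝ) ^ k
      rw [Real.rpow_neg (by norm_num), Real.rpow_natCast, one_div, inv_pow]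
    set d : ℕ → ENNReal := fun k =>
      ENNReal.ofReal ((b (k+1)) ^ (θ-1) * F (b (k+1) * s)) with hddef
    set A : ℕ → Set ℝ := fun k => Set.Ioc (b (k+1)) (b k) with hAdef
    set h : ℕ → ℝ → ENNReal := fun k => (A k).indicator (fun _ => d k) with hhdef
    set g : ℝ → ENNReal := fun ρ => ∑' k, h k ρ with hgdef
    have hgm : Measurable g :=
      Measurable.ennreal_tsum (fun k => measurable_const.indicator measurableSet_Ioc)
    -- pointwise claim
    have hclaim : ∀ x ∈ Set.Icc (0:ℝ) 1, ∀ y ∈ Set.Icc (0:ℝ) 1,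
        ENNReal.ofReal (F (s * |x - y|) / |x - y| ^ (1 - θ)) ≤ g (|x - y|) := by
      intro x hx y hy
      rcases eq_or_lt_of_le (abs_nonneg (x - y)) with h0 | hρ
      · rw [← h0, Real.zero_rpow (by intro hc; exact absurd hc (by linarith)), div_zero,
          ENNReal.ofReal_zero]
        exact zero_le
      · set ρ : ℝ := |x - y| with hρdef
        have hρ1 : ρ ≤ 1 := by
          rw [hρdef, abs_le]
          constructor <;> [linarith [hx.1, hx.2, hy.1, hy.2]; linarith [hx.1, hx.2, hy.1, hy.2]]
        obtain ⟨m, hm⟩ := exists_pow_lt_of_lt_one hρ (by norm_num : (1/2:ℝ) < 1)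
        have hex : ∃ n : ℕ, (1/2:ℝ) ^ (n+1) < ρ :=
          ⟨m, lt_of_le_of_lt (pow_le_pow_of_le_one (by norm_num) (by norm_num)
            (Nat.le_succ m)) hm⟩
        set k := Nat.find hex with hkdef
        have hk1 : (1/2:ℝ) ^ (k+1) < ρ := Nat.find_spec hex
        have hk2 : ρ ≤ (1/2:ℝ) ^ k := by
          rcases Nat.eq_zero_or_pos k with hk0 | hkpos
          · rw [hk0, pow_zero]; exact hρ1
          · have hmin := Nat.find_min hex (m := k - 1) (by omega)
            push_neg at hmin
            have heq : k - 1 + 1 = k := by omega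
            rwa [heq] at hmin
        have hmem : ρ ∈ A k := ⟨by rw [hbhalf]; exact hk1, by rw [hbhalf]; exact hk2⟩
        have hle : ENNReal.ofReal (F (s * ρ) / ρ ^ (1 - θ)) ≤ d k := by
          apply ENNReal.ofReal_le_ofReal
          have hdiv : F (s * ρ) / ρ ^ (1 - θ) = F (s * ρ) * ρ ^ (θ - 1) := by
            rw [div_eq_mul_inv, ← Real.rpow_neg hρ.le]
            ring_nf
          rw [hdiv]
          have hFle : F (s * ρ) ≤ F (b (k+1) * s) := by
            refine hFanti (Set.mem_Ici.mpr (by positivity))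
              (Set.mem_Ici.mpr (by positivity)) ?_
            nlinarith [hmem.1, hbpos (k+1)]
          have hRle : ρ ^ (θ - 1) ≤ (b (k+1)) ^ (θ - 1) :=
            Real.rpow_le_rpow_of_nonpos (hbpos (k+1)) hmem.1.le (by linarith)
          calc F (s * ρ) * ρ ^ (θ - 1)
              ≤ F (b (k+1) * s) * (b (k+1)) ^ (θ - 1) :=
                mul_le_mul hFle hRle (Real.rpow_nonneg hρ.le _)
                  (hF0 _ (by positivity))
            _ = (b (k+1)) ^ (θ - 1) * F (b (k+1) * s) := mul_comm _ _
        have hkval : h k ρ = d k := Set.indicator_of_mem hmem _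
        refine hle.trans ?_
        rw [hgdef, ← hkval]
        exact ENNReal.le_tsum k
    -- per-k integral bound
    have hinner : ∀ x : ℝ, ∀ k : ℕ,
        (∫⁻ y in Set.Icc (0:ℝ) 1, h k (|x - y|)) ≤ d k * ENNReal.ofReal (2 * b k) := by
      intro x k
      have hpt : ∀ y : ℝ, h k (|x - y|) ≤
          (Set.Icc (x - b k) (x + b k)).indicator (fun _ => d k) y := by
        intro y
        by_cases hy : |x - y| ∈ A k
        · rw [hhdef]
          simp only []
          rw [Set.indicator_of_mem hy]
          have hy2 := hy.2
          have habs := abs_le.mp hy2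
          have : y ∈ Set.Icc (x - b k) (x + b k) :=
            ⟨by linarith [habs.2], by linarith [habs.1]⟩
          rw [Set.indicator_of_mem this]
        · rw [hhdef]
          simp only []
          rw [Set.indicator_of_notMem hy]
          exact zero_le
      calc (∫⁻ y in Set.Icc (0:ℝ) 1, h k (|x - y|))
          ≤ ∫⁻ y in Set.Icc (0:ℝ) 1,
              (Set.Icc (x - b k) (x + b k)).indicator (fun _ => d k) y :=
            lintegral_mono hpt
        _ ≤ ∫⁻ y, (Set.Icc (x - b k) (x + b k)).indicator (fun _ => d k) y :=
            setLIntegral_le_lintegral _ _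
        _ = d k * volume (Set.Icc (x - b k) (x + b k)) :=
            lintegral_indicator_const measurableSet_Icc _
        _ = d k * ENNReal.ofReal (2 * b k) := by
            rw [Real.volume_Icc]
            congr 1
            ring_nf
    set Ctot : ENNReal := ∑' k, d k * ENNReal.ofReal (2 * b k) with hCdef
    have houter : ∀ x ∈ Set.Icc (0:ℝ) 1,
        (∫⁻ y in Set.Icc (0:ℝ) 1,
          ENNReal.ofReal (F (s * |x - y|) / |x - y| ^ (1 - θ))) ≤ Ctot := by
      intro x hx
      have hmy : Measurable fun y : ℝ => g (|x - y|) :=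
        hgm.comp ((measurable_const.sub measurable_id).abs)
      calc (∫⁻ y in Set.Icc (0:ℝ) 1,
            ENNReal.ofReal (F (s * |x - y|) / |x - y| ^ (1 - θ)))
          ≤ ∫⁻ y in Set.Icc (0:ℝ) 1, g (|x - y|) :=
            setLIntegral_mono hmy (fun y hy => hclaim x hx y hy)
        _ = ∑' k, ∫⁻ y in Set.Icc (0:ℝ) 1, h k (|x - y|) := by
            rw [hgdef]
            exact lintegral_tsum (fun k =>
              ((measurable_const.indicator measurableSet_Ioc).comp
                ((measurable_const.sub measurable_id).abs)).aemeasurable)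
        _ ≤ Ctot := ENNReal.tsum_le_tsum (fun k => hinner x k)
    have hmain : (∫⁻ x in Set.Icc (0:ℝ) 1, ∫⁻ y in Set.Icc (0:ℝ) 1,
        ENNReal.ofReal (F (s * |x - y|) / |x - y| ^ (1 - θ))) ≤ Ctot := by
      calc (∫⁻ x in Set.Icc (0:ℝ) 1, ∫⁻ y in Set.Icc (0:ℝ) 1,
            ENNReal.ofReal (F (s * |x - y|) / |x - y| ^ (1 - θ)))
          ≤ ∫⁻ _ in Set.Icc (0:ℝ) 1, Ctot := setLIntegral_mono measurable_const houter
        _ = Ctot * volume (Set.Icc (0:ℝ) 1) := setLIntegral_const _ _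
        _ = Ctot := by rw [Real.volume_Icc]; norm_num
    refine hmain.trans ?_
    -- compute Ctot
    have hterm_eq : ∀ k : ℕ, d k * ENNReal.ofReal (2 * b k) =
        ENNReal.ofReal (4 * a (k+1)) := by
      intro k
      rw [hddef]
      simp only []
      rw [← ENNReal.ofReal_mul (mul_nonneg (Real.rpow_nonneg (hbpos _).le _)
        (hF0 _ (by positivity)))]
      congr 1
      have e1 : (b (k+1)) ^ (θ-1) * (2 * b k) = 4 * (2:ℝ) ^ (-((k:ℝ)+1) * θ) := by
        have h2 : (0:ℝ) < 2 := two_pos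
        rw [hbdef]
        simp only []
        push_cast
        rw [← Real.rpow_mul (by norm_num : (0:ℝ) ≤ 2)]
        rw [show (2:ℝ) * (2:ℝ) ^ (-(k:ℝ)) = (2:ℝ) ^ (1:ℝ) * (2:ℝ) ^ (-(k:ℝ)) by
          rw [Real.rpow_one]]
        rw [← Real.rpow_add h2, ← Real.rpow_add h2]
        rw [show -((k:ℝ)+1) * (θ-1) + (1 + -(k:ℝ)) = (2:ℝ) + -((k:ℝ)+1) * θ by ring]
        rw [Real.rpow_add h2]
        congr 1
        rw [show (2:ℝ) = ((2:ℕ):ℝ) by norm_num, Real.rpow_natCast]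
        norm_num
      calc (b (k+1)) ^ (θ-1) * F (b (k+1) * s) * (2 * b k)
          = ((b (k+1)) ^ (θ-1) * (2 * b k)) * F (b (k+1) * s) := by ring
        _ = (4 * (2:ℝ) ^ (-((k:ℝ)+1) * θ)) * F (b (k+1) * s) := by rw [e1]
        _ = 4 * a (k+1) := by
            rw [hadef, hbdef]
            push_cast
            ring
    have hCeq : Ctot = ∑' k : ℕ, ENNReal.ofReal (4 * a (k+1)) := tsum_congr hterm_eq
    rw [hCeq]
    have hsub : (∑' k : ℕ, ENNReal.ofReal (4 * a (k+1))) ≤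
        ∑' j : ℕ, ENNReal.ofReal (4 * a j) :=
      ENNReal.tsum_comp_le_tsum_of_injective Nat.succ_injective (fun j => ENNReal.ofReal (4 * a j))
    refine hsub.trans ?_
    rw [← ENNReal.ofReal_tsum_of_nonneg (fun j => by
        have := hterm0 s hs.le j
        linarith)
      ((hsum s hs.le).mul_left 4)]
    rw [tsum_mul_left]
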